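/- In the category of topological spaces, the class ({ {a} → {a ↔ b}, Sierpinski-codiscrete map })^l, i.e. the left complement of the two maps: (i) the inclusion of a point into the two-point indiscrete space, and (ii) the map from the Sierpinski space {o → c} to the two-point indiscrete space {o ↔ c}, is exactly the class of quotient maps (canonical mappings X → X/R for equivalence relations R). -/

import Mathlib

/-- The Quillen lifting property `f ⧄ g` for continuous maps. -/
def HasLift {A B X Y : Type*} [TopologicalSpace A] [TopologicalSpace B] [TopologicalSpace X]
    [TopologicalSpace Y] (f : C(A, B)) (g : C(X, Y)) : Prop :=
  ∀ (t : C(A, X)) (b : C(B, Y)), (∀ a, g (t a) = b (f a)) →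
    ∃ h : C(B, X), (∀ a, h (f a) = t a) ∧ (∀ x, g (h x) = b x)

/-- The Sierpinski space `{o → c}`: `o` open, `c` closed. -/
inductive Sierp : Type
  | o : Sierp
  | c : Sierp

instance : TopologicalSpace Sierp where
  IsOpen s := Sierp.c ∈ s → Sierp.o ∈ s
  isOpen_univ := fun _ => trivial
  isOpen_inter := fun _ _ hs ht h => ⟨hs h.1, ht h.2⟩
  isOpen_sUnion := fun S hS h => by
    obtain ⟨s, hs, hcs⟩ := h
    exact ⟨s, hs, hS s hs hcs⟩

/-- The two-point indiscrete (antidiscrete) space `{o ↔ c}`. -/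
inductive Indisc : Type
  | o : Indisc
  | c : Indisc

instance : TopologicalSpace Indisc where
  IsOpen s := Indisc.o ∈ s ↔ Indisc.c ∈ s
  isOpen_univ := Iff.rfl
  isOpen_inter := fun _ _ hs ht => and_congr hs ht
  isOpen_sUnion := fun S hS =>
    ⟨fun ⟨s, hs, h⟩ => ⟨s, hs, (hS s hs).1 h⟩, fun ⟨s, hs, h⟩ => ⟨s, hs, (hS s hs).2 h⟩⟩

/-- The inclusion of a point into the two-point indiscrete space. -/
def ptToIndisc : C(PUnit, Indisc) :=
  ⟨fun _ => Indisc.o, continuous_const⟩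

/-- The map from the Sierpinski space to the two-point indiscrete space which is
the identity on points (`o ↦ o`, `c ↦ c`). -/
def sierpToIndisc : C(Sierp, Indisc) :=
  ⟨fun x => match x with | Sierp.o => Indisc.o | Sierp.c => Indisc.c,
    continuous_def.mpr fun s hs => fun h => hs.2 h⟩

open Classical in
lemma indisc_continuous {Z : Type*} [TopologicalSpace Z] (g : Z → Indisc) : Continuous g := by
  rw [continuous_def]
  intro s hs
  by_cases ho : Indisc.o ∈ s
  · have hc : Indisc.c ∈ s := hs.1 ho
    have : g ⁻¹' s = Set.univ := by
      ext z; simp only [Set.mem_preimage, Set.mem_univ, iff_true]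
      cases g z <;> assumption
    rw [this]; exact isOpen_univ
  · have hc : Indisc.c ∉ s := fun h => ho (hs.2 h)
    have : g ⁻¹' s = ∅ := by
      ext z; simp only [Set.mem_preimage, Set.mem_empty_iff_false, iff_false]
      cases g z <;> assumption
    rw [this]; exact isOpen_empty

lemma sierp_open_o : IsOpen ({Sierp.o} : Set Sierp) := by
  intro h; exact absurd h (by simp)

lemma sierp_continuous {Z : Type*} [TopologicalSpace Z] (g : Z → Sierp)
    (h : IsOpen (g ⁻¹' {Sierp.o})) : Continuous g := by
  rw [continuous_def]
  intro u hu
  by_cases hc : Sierp.c ∈ u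
  · have ho : Sierp.o ∈ u := hu hc
    have : g ⁻¹' u = Set.univ := by
      ext z; simp only [Set.mem_preimage, Set.mem_univ, iff_true]
      cases g z <;> assumption
    rw [this]; exact isOpen_univ
  · by_cases ho : Sierp.o ∈ u
    · have : g ⁻¹' u = g ⁻¹' {Sierp.o} := by
        ext z; simp only [Set.mem_preimage, Set.mem_singleton_iff]
        cases hz : g z
        · exact iff_of_true ho rfl
        · exact iff_of_false hc (by simp)
      rw [this]; exact h
    · have : g ⁻¹' u = ∅ := by
        ext z; simp only [Set.mem_preimage, Set.mem_empty_iff_false, iff_false]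
        cases g z <;> assumption
      rw [this]; exact isOpen_empty

/-- The left lifting complement of the two maps `{a} → {a ↔ b}` and
`{o → c} → {o ↔ c}` is exactly the class of quotient maps. -/
theorem llp_eq_quotient_maps {A B : Type*} [TopologicalSpace A] [TopologicalSpace B]
    (f : C(A, B)) :
    (HasLift f ptToIndisc ∧ HasLift f sierpToIndisc) ↔ Topology.IsQuotientMap f := by
  rw [show Topology.IsQuotientMap f ↔ Function.Surjective f ∧ ∀ s : Set B, IsOpen s ↔ IsOpen (f ⁻¹' s) from
    Iff.trans (Topology.isQuotientMap_iff _) (and_comm.trans (and_congr Iff.rfl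
      (Iff.trans Topology.isCoinducing_iff (forall_congr' fun _ => iff_comm))))]
  constructor
  · rintro ⟨h1, h2⟩
    constructor
    · -- surjectivity
      intro y
      by_contra hy
      push_neg at hy
      classical
      set b : C(B, Indisc) := ⟨fun x => if x ∈ Set.range f then Indisc.o else Indisc.c,
        indisc_continuous _⟩ with hbdef
      obtain ⟨h, -, hh2⟩ := h1 ⟨fun _ => PUnit.unit, continuous_const⟩ b
        (fun a => by
          show Indisc.o = if f a ∈ Set.range f then Indisc.o else Indisc.c
          rw [if_pos ⟨a, rfl⟩])
      have hthis : Indisc.o = if y ∈ Set.range f then Indisc.o else Indisc.c := hh2 y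
      rw [if_neg (by rintro ⟨a, ha⟩; exact hy a ha)] at hthis
      exact Indisc.noConfusion hthis
    · intro s
      constructor
      · intro hs
        exact hs.preimage f.continuous
      · intro hs
        classical
        set b : C(B, Indisc) := ⟨fun x => if x ∈ s then Indisc.o else Indisc.c,
          indisc_continuous _⟩ with hbdef
        set t : C(A, Sierp) := ⟨fun a => if f a ∈ s then Sierp.o else Sierp.c,
          sierp_continuous _ (by
            have : (fun a => if f a ∈ s then Sierp.o else Sierp.c) ⁻¹' {Sierp.o} = f ⁻¹' s := by
              ext a
              by_cases h : f a ∈ s <;> simp [h]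
            rw [this]; exact hs)⟩ with htdef
        obtain ⟨h, -, hh2⟩ := h2 t b (fun a => by
          show sierpToIndisc (if f a ∈ s then Sierp.o else Sierp.c)
            = if f a ∈ s then Indisc.o else Indisc.c
          by_cases hfa : f a ∈ s
          · rw [if_pos hfa, if_pos hfa]; rfl
          · rw [if_neg hfa, if_neg hfa]; rfl)
        have hkey : s = h ⁻¹' {Sierp.o} := by
          ext x
          simp only [Set.mem_preimage, Set.mem_singleton_iff]
          by_cases hx : x ∈ s
          · simp only [hx, true_iff]
            have hb : sierpToIndisc (h x) = Indisc.o := by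
              rw [hh2 x]
              show (if x ∈ s then Indisc.o else Indisc.c) = Indisc.o
              exact if_pos hx
            cases hhx : h x
            · rfl
            · rw [hhx] at hb
              exact Indisc.noConfusion hb
          · simp only [hx, false_iff]
            have hb : sierpToIndisc (h x) = Indisc.c := by
              rw [hh2 x]
              show (if x ∈ s then Indisc.o else Indisc.c) = Indisc.c
              exact if_neg hx
            intro hhx
            rw [hhx] at hb
            exact Indisc.noConfusion hb
        rw [hkey]
        exact sierp_open_o.preimage h.continuous
  · rintro ⟨hsurj, hopen⟩
    constructor
    · -- lift against ptToIndisc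
      intro t b hb
      refine ⟨⟨fun _ => PUnit.unit, continuous_const⟩, fun a => rfl, fun x => ?_⟩
      obtain ⟨a, ha⟩ := hsurj x
      rw [← ha, ← hb a]
    · -- lift against sierpToIndisc
      intro t b hb
      classical
      have hba : ∀ a, b (f a) = sierpToIndisc (t a) := fun a => (hb a).symm
      set h : B → Sierp := fun x => match b x with
        | Indisc.o => Sierp.o
        | Indisc.c => Sierp.c with hdef
      have hpre : h ⁻¹' {Sierp.o} = b ⁻¹' {Indisc.o} := by
        ext x
        simp only [Set.mem_preimage, Set.mem_singleton_iff, hdef]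
        cases hx : b x <;> simp
      have hto : IsOpen (⇑t ⁻¹' {Sierp.o}) := sierp_open_o.preimage t.continuous
      have hbo : IsOpen (⇑b ⁻¹' {Indisc.o}) := by
        rw [hopen]
        have heq : ⇑f ⁻¹' (⇑b ⁻¹' {Indisc.o}) = ⇑t ⁻¹' {Sierp.o} := by
          ext a
          simp only [Set.mem_preimage, Set.mem_singleton_iff, hba a]
          cases t a
          · simp [sierpToIndisc]
          · simp [sierpToIndisc]
        rw [heq]; exact hto
      have hcont : Continuous h := sierp_continuous h (hpre ▸ hbo)
      refine ⟨⟨h, hcont⟩, fun a => ?_, fun x => ?_⟩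
      · simp only [ContinuousMap.coe_mk, hdef, hba a]
        cases t a
        · rfl
        · rfl
      · simp only [ContinuousMap.coe_mk, hdef]
        cases b x
        · rfl
        · rfl
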